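/- The number of generalized stammering tableaux from ∅ to a partition λ with |λ| = k, i.e., sequences (λ^{(0)}, ..., λ^{(3n)}) of partitions with λ^{(0)} = ∅, λ^{(3n)} = λ, where for i ≡ 0,1 (mod 3) either λ^{(i)} ⋖ λ^{(i+1)} or λ^{(i)} = λ^{(i+1)}, and for i ≡ 2 (mod 3), λ^{(i)} ⋗ λ^{(i+1)}, equals (n+1)! · C(n,k) · f_λ, where f_λ is the number of standard Young tableaux of shape λ. -/

import Mathlib

/-- A partition, encoded by its (weakly decreasing, eventually zero) sequence
of parts. -/
def IsPartition (l : ℕ → ℕ) : Prop :=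
  Antitone l ∧ ∃ N : ℕ, ∀ i : ℕ, N ≤ i → l i = 0

/-- The cover relation in Young's lattice: `ν` is obtained from `μ` by adding
one box. -/
def CoverY (μ ν : ℕ → ℕ) : Prop :=
  IsPartition μ ∧ IsPartition ν ∧
    ∃ j : ℕ, ν j = μ j + 1 ∧ ∀ i : ℕ, i ≠ j → ν i = μ i

/-- The number of standard Young tableaux of shape `lam` with `|lam| = k`:
saturated chains `∅ ⋖ ⋯ ⋖ lam` in Young's lattice. -/
noncomputable def numSYT (k : ℕ) (lam : ℕ → ℕ) : ℕ :=
  {T : Fin (k + 1) → (ℕ → ℕ) |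
    T 0 = (fun _ => 0) ∧ T (Fin.last k) = lam ∧
    ∀ i : Fin k, CoverY (T i.castSucc) (T i.succ)}.ncard

noncomputable section StammAux

open Finset

abbrev Yl := ℕ → ℕ

def zf : Yl := fun _ => 0

lemma isPartition_zf : IsPartition zf :=
  ⟨antitone_const, 0, fun _ _ => rfl⟩

/-- bounded sequences -/
def Bdd (b : ℕ) (l : Yl) : Prop :=
  (∀ j, l j ≤ b) ∧ ∀ j, b ≤ j → l j = 0

lemma bdd_mono {b b' : ℕ} {l : Yl} (h : Bdd b l) (hb : b ≤ b') : Bdd b' l :=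
  ⟨fun j => (h.1 j).trans hb, fun j hj => h.2 j (hb.trans hj)⟩

lemma bdd_zf (b : ℕ) : Bdd b zf := ⟨fun _ => Nat.zero_le _, fun _ _ => rfl⟩

lemma finite_Bdd (b : ℕ) : {l : Yl | Bdd b l}.Finite := by
  apply Set.Finite.subset (Set.finite_range
    (fun g : Fin b → Fin (b+1) => (fun i => if h : i < b then (g ⟨i, h⟩ : ℕ) else 0 : Yl)))
  intro l hl
  refine ⟨fun i => ⟨l i, Nat.lt_succ_of_le (hl.1 i)⟩, ?_⟩
  funext i
  by_cases h : i < b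
  · simp [h]
  · simp only [h, dif_neg, not_false_iff]
    exact (hl.2 i (le_of_not_gt h)).symm

def bddF (b : ℕ) : Finset Yl := (finite_Bdd b).toFinset

lemma mem_bddF {b : ℕ} {l : Yl} : l ∈ bddF b ↔ Bdd b l := by
  simp [bddF, Set.Finite.mem_toFinset]

/-- size of a partition -/
def sz (l : Yl) : ℕ := ∑ᶠ i, l i

lemma sz_zf : sz zf = 0 := by
  simp [sz, zf]

lemma support_subset_range {l : Yl} {N : ℕ} (hN : ∀ i, N ≤ i → l i = 0) :
    Function.support l ⊆ ↑(Finset.range N) := by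
  intro i hi
  simp only [Function.mem_support] at hi
  simp only [Finset.coe_range, Set.mem_Iio]
  by_contra h
  exact hi (hN i (le_of_not_gt h))

lemma sz_eq_sum {l : Yl} {N : ℕ} (hN : ∀ i, N ≤ i → l i = 0) :
    sz l = ∑ i ∈ Finset.range N, l i :=
  finsum_eq_sum_of_support_subset l (support_subset_range hN)

lemma le_sz {l : Yl} (hl : IsPartition l) (j : ℕ) : l j ≤ sz l := by
  obtain ⟨N, hN⟩ := hl.2
  by_cases h : l j = 0
  · simp [h]
  · have hj : j < max N (j+1) := lt_of_lt_of_le (Nat.lt_succ_self j) (le_max_right _ _)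
    rw [sz_eq_sum (N := max N (j+1)) (fun i hi => hN i (le_trans (le_max_left _ _) hi))]
    exact Finset.single_le_sum (fun i _ => Nat.zero_le _) (Finset.mem_range.2 hj)

lemma sz_pos {l : Yl} (hl : IsPartition l) (hne : l ≠ zf) : 1 ≤ sz l := by
  have : ∃ j, l j ≠ 0 := by
    by_contra h
    push_neg at h
    exact hne (funext h)
  obtain ⟨j, hj⟩ := this
  exact le_trans (Nat.one_le_iff_ne_zero.2 hj) (le_sz hl j)

lemma bdd_of_sz {l : Yl} (hl : IsPartition l) {b : ℕ} (h : sz l ≤ b) : Bdd b l := by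
  constructor
  · exact fun j => (le_sz hl j).trans h
  · intro j hj
    by_contra hc
    have h1 : ∀ i, i ≤ j → 1 ≤ l i := fun i hi =>
      le_trans (Nat.one_le_iff_ne_zero.2 hc) (hl.1 hi)
    obtain ⟨N, hN⟩ := hl.2
    have : sz l = ∑ i ∈ Finset.range (max N (j+1)), l i :=
      sz_eq_sum (fun i hi => hN i (le_trans (le_max_left _ _) hi))
    have hsub : Finset.range (j+1) ⊆ Finset.range (max N (j+1)) :=
      Finset.range_subset_range.2 (le_max_right _ _)
    have : j + 1 ≤ sz l := by
      calc j + 1 = ∑ _i ∈ Finset.range (j+1), 1 := by simp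
      _ ≤ ∑ i ∈ Finset.range (j+1), l i :=
          Finset.sum_le_sum (fun i hi => h1 i (Nat.lt_succ_iff.1 (Finset.mem_range.1 hi)))
      _ ≤ ∑ i ∈ Finset.range (max N (j+1)), l i :=
          Finset.sum_le_sum_of_subset hsub
      _ = sz l := (sz_eq_sum (fun i hi => hN i (le_trans (le_max_left _ _) hi))).symm
    omega

lemma eq_zf_of_sz_eq_zero {l : Yl} (hl : IsPartition l) (h : sz l = 0) : l = zf := by
  funext j
  have := le_sz hl j
  show l j = 0
  omega

lemma cover_ne {a b : Yl} (h : CoverY a b) : a ≠ b := by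
  obtain ⟨_, _, j, hj, _⟩ := h
  intro he
  rw [he] at hj
  omega

lemma cover_sz {a b : Yl} (h : CoverY a b) : sz b = sz a + 1 := by
  obtain ⟨ha, hb, j, hj, hj'⟩ := h
  obtain ⟨Na, hNa⟩ := ha.2
  obtain ⟨Nb, hNb⟩ := hb.2
  set N := max (max Na Nb) (j+1) with hN
  have hja : j < N := lt_of_lt_of_le (Nat.lt_succ_self j) (le_max_right _ _)
  have hsa : sz a = ∑ i ∈ Finset.range N, a i :=
    sz_eq_sum (fun i hi => hNa i (le_trans ((le_max_left _ _).trans (le_max_left _ _)) hi))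
  have hsb : sz b = ∑ i ∈ Finset.range N, b i :=
    sz_eq_sum (fun i hi => hNb i (le_trans ((le_max_right _ _).trans (le_max_left _ _)) hi))
  rw [hsa, hsb]
  have : ∀ i, b i = a i + (if i = j then 1 else 0) := by
    intro i
    by_cases h : i = j
    · subst h; simp [hj]
    · simp [h, hj' i h]
  calc ∑ i ∈ Finset.range N, b i
      = ∑ i ∈ Finset.range N, (a i + if i = j then 1 else 0) := by
        exact Finset.sum_congr rfl (fun i _ => this i)
    _ = (∑ i ∈ Finset.range N, a i) + ∑ i ∈ Finset.range N, (if i = j then 1 else 0) :=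
        Finset.sum_add_distrib
    _ = (∑ i ∈ Finset.range N, a i) + 1 := by
        rw [Finset.sum_ite_eq' (Finset.range N) j (fun _ => 1)]
        simp [Finset.mem_range.2 hja]

lemma cover_bdd {a b : Yl} (h : CoverY a b) {c : ℕ} (hc : Bdd c a) : Bdd (c+1) b := by
  obtain ⟨ha, hb, j, hj, hj'⟩ := h
  constructor
  · intro i
    by_cases hij : i = j
    · subst hij; rw [hj]; exact Nat.succ_le_succ (hc.1 i)
    · rw [hj' i hij]; exact (hc.1 i).trans (Nat.le_succ c)
  · intro i hi
    by_cases hij : i = j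
    · subst hij
      exfalso
      have h1 : 1 ≤ i := le_trans (Nat.le_add_left 1 c) hi
      have : b (i-1) = a (i-1) := hj' (i-1) (by omega)
      have hai : a (i-1) = 0 := hc.2 (i-1) (by omega)
      have : b i ≤ b (i-1) := hb.1 (by omega)
      omega
    · rw [hj' i hij]
      exact hc.2 i (by omega)

lemma cover_bdd_rev {a b : Yl} (h : CoverY b a) {c : ℕ} (hc : Bdd c a) : Bdd (c+1) b := by
  obtain ⟨hb, ha, j, hj, hj'⟩ := h
  have hle : ∀ i, b i ≤ a i := by
    intro i
    by_cases hij : i = j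
    · subst hij; omega
    · rw [hj' i hij]
  exact bdd_mono ⟨fun i => (hle i).trans (hc.1 i), fun i hi => by have := hle i; have := hc.2 i hi; omega⟩ (Nat.le_succ c)


def addB (l : Yl) (j : ℕ) : Yl := fun i => if i = j then l i + 1 else l i
def remB (l : Yl) (j : ℕ) : Yl := fun i => if i = j then l i - 1 else l i

/-- row `j` is addable -/
def Addable (l : Yl) (j : ℕ) : Prop := ∀ d, j = d + 1 → l (d+1) < l d

/-- row `j` is removable -/
def Removable (l : Yl) (j : ℕ) : Prop := l (j+1) < l j

lemma cover_up_iff {l v : Yl} (hl : IsPartition l) :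
    CoverY l v ↔ ∃ j, Addable l j ∧ v = addB l j := by
  constructor
  · rintro ⟨-, hv, j, hj, hj'⟩
    refine ⟨j, ?_, ?_⟩
    · rintro d rfl
      have h1 : v (d+1) ≤ v d := hv.1 (show d ≤ d + 1 by omega)
      have h2 : v d = l d := hj' d (by omega)
      omega
    · funext i
      by_cases h : i = j
      · subst h; simp [addB, hj]
      · simp [addB, h, hj' i h]
  · rintro ⟨j, hadd, rfl⟩
    have hpart : IsPartition (addB l j) := by
      constructor
      · apply antitone_nat_of_succ_le
        intro i
        by_cases h1 : i + 1 = j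
        · have := hadd i h1.symm
          simp only [addB, if_pos h1, if_neg (show i ≠ j by omega)]
          omega
        · by_cases h2 : i = j
          · simp only [addB, if_pos h2, if_neg h1]
            have := hl.1 (show i ≤ i + 1 by omega)
            omega
          · simp only [addB, if_neg h1, if_neg h2]
            exact hl.1 (show i ≤ i + 1 by omega)
      · obtain ⟨N, hN⟩ := hl.2
        refine ⟨max N (j+1), fun i hi => ?_⟩
        have h1 : i ≠ j := by
          have := le_trans (le_max_right _ _) hi
          omega
        simp [addB, h1, hN i (le_trans (le_max_left _ _) hi)]
    exact ⟨hl, hpart, j, by simp [addB], fun i hi => by simp [addB, hi]⟩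

lemma cover_down_iff {l v : Yl} (hl : IsPartition l) :
    CoverY v l ↔ ∃ j, Removable l j ∧ v = remB l j := by
  constructor
  · rintro ⟨hv, -, j, hj, hj'⟩
    refine ⟨j, ?_, ?_⟩
    · have h1 : v (j+1) ≤ v j := hv.1 (show j ≤ j + 1 by omega)
      have h2 : l (j+1) = v (j+1) := hj' (j+1) (by omega)
      unfold Removable
      omega
    · funext i
      by_cases h : i = j
      · subst h
        simp [remB]
        omega
      · simp only [remB, if_neg h]; exact (hj' i h).symm
  · rintro ⟨j, hrem, rfl⟩
    have hrem' : l (j+1) < l j := hrem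
    have hpart : IsPartition (remB l j) := by
      constructor
      · apply antitone_nat_of_succ_le
        intro i
        by_cases h1 : i + 1 = j
        · have hle := hl.1 (show i ≤ i + 1 by omega)
          simp only [remB, if_pos h1, if_neg (show i ≠ j by omega)]
          omega
        · by_cases h2 : i = j
          · subst h2
            have := hl.1 (show i ≤ i + 1 by omega)
            simp [remB, if_neg (show ¬ i + 1 = i by omega)]
            omega
          · simp only [remB, if_neg h1, if_neg h2]
            exact hl.1 (show i ≤ i + 1 by omega)
      · obtain ⟨N, hN⟩ := hl.2
        refine ⟨N, fun i hi => ?_⟩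
        have hz := hN i hi
        by_cases h : i = j
        · subst h; simp [remB, hz]
        · simp [remB, h, hz]
    refine ⟨hpart, hl, j, ?_, fun i hi => by simp [remB, hi]⟩
    simp [remB]
    omega

def UpS (l : Yl) : Set Yl := {v | CoverY l v}
def DownS (l : Yl) : Set Yl := {v | CoverY v l}

lemma addB_injOn (l : Yl) : Set.InjOn (addB l) Set.univ := by
  intro j _ j' _ h
  by_contra hne
  have := congrFun h j
  simp [addB, hne] at this

lemma remB_injOn (l : Yl) : Set.InjOn (remB l) {j | Removable l j} := by
  intro j hj j' hj' h
  by_contra hne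
  have := congrFun h j
  have h1 : l (j+1) < l j := hj
  simp [remB, hne] at this
  omega

lemma finite_Removable {l : Yl} (hl : IsPartition l) : {j | Removable l j}.Finite := by
  obtain ⟨N, hN⟩ := hl.2
  apply Set.Finite.subset (Set.finite_Iio N)
  intro j hj
  simp only [Set.mem_Iio]
  by_contra h
  have h1 : l j = 0 := hN j (le_of_not_gt h)
  have : l (j+1) < l j := hj
  omega

lemma Addable_eq (l : Yl) :
    {j | Addable l j} = insert 0 ((fun d => d + 1) '' {j | Removable l j}) := by
  ext j
  simp only [Set.mem_setOf_eq, Set.mem_insert_iff, Set.mem_image]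
  constructor
  · intro h
    match j with
    | 0 => exact Or.inl rfl
    | d+1 => exact Or.inr ⟨d, h d rfl, rfl⟩
  · rintro (rfl | ⟨d, hd, rfl⟩)
    · intro d hd; omega
    · intro d' hd'
      have : d' = d := by omega
      subst this
      exact hd

lemma finite_Addable {l : Yl} (hl : IsPartition l) : {j | Addable l j}.Finite := by
  rw [Addable_eq]
  exact Set.Finite.insert 0 ((finite_Removable hl).image _)

lemma UpS_eq {l : Yl} (hl : IsPartition l) : UpS l = addB l '' {j | Addable l j} := by
  ext v
  simp only [UpS, Set.mem_setOf_eq, Set.mem_image, cover_up_iff hl]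
  tauto

lemma DownS_eq {l : Yl} (hl : IsPartition l) : DownS l = remB l '' {j | Removable l j} := by
  ext v
  simp only [DownS, Set.mem_setOf_eq, Set.mem_image, cover_down_iff hl]
  tauto

lemma finite_UpS (l : Yl) : (UpS l).Finite := by
  by_cases hl : IsPartition l
  · rw [UpS_eq hl]; exact ((finite_Addable hl).image _)
  · convert Set.finite_empty
    ext v
    simp only [UpS, Set.mem_setOf_eq, Set.mem_empty_iff_false, iff_false]
    exact fun h => hl h.1

lemma finite_DownS (l : Yl) : (DownS l).Finite := by
  by_cases hl : IsPartition l
  · rw [DownS_eq hl]; exact ((finite_Removable hl).image _)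
  · convert Set.finite_empty
    ext v
    simp only [DownS, Set.mem_setOf_eq, Set.mem_empty_iff_false, iff_false]
    exact fun h => hl h.2.1

def upF (l : Yl) : Finset Yl := (finite_UpS l).toFinset
def downF (l : Yl) : Finset Yl := (finite_DownS l).toFinset

lemma mem_upF {l v : Yl} : v ∈ upF l ↔ CoverY l v := by
  simp [upF, Set.Finite.mem_toFinset, UpS]

lemma mem_downF {l v : Yl} : v ∈ downF l ↔ CoverY v l := by
  simp [downF, Set.Finite.mem_toFinset, DownS]

/-- differential poset property (i) -/
lemma card_up_eq_card_down_add_one {l : Yl} (hl : IsPartition l) :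
    (upF l).card = (downF l).card + 1 := by
  have h1 : (upF l).card = (UpS l).ncard := by
    rw [Set.ncard_eq_toFinset_card _ (finite_UpS l)]; rfl
  have h2 : (downF l).card = (DownS l).ncard := by
    rw [Set.ncard_eq_toFinset_card _ (finite_DownS l)]; rfl
  rw [h1, h2, UpS_eq hl, DownS_eq hl]
  rw [Set.ncard_image_of_injOn ((addB_injOn l).mono (Set.subset_univ _)),
    Set.ncard_image_of_injOn (remB_injOn l), Addable_eq]
  rw [Set.ncard_insert_of_notMem (by simp) (((finite_Removable hl).image _))]
  rw [Set.ncard_image_of_injOn ((add_left_injective 1).injOn)]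

lemma downF_zf : downF zf = ∅ := by
  ext v
  simp only [mem_downF, Finset.notMem_empty, iff_false]
  rintro ⟨-, -, j, hj, -⟩
  have : zf j = 0 := rfl
  omega

section CommonCovers

lemma cover_two_up {l κ a : Yl} (h1 : CoverY l a) (h2 : CoverY κ a) (hne : l ≠ κ) :
    ∃ p q, p ≠ q ∧ a p = l p + 1 ∧ (∀ i, i ≠ p → a i = l i) ∧
      a q = κ q + 1 ∧ (∀ i, i ≠ q → a i = κ i) := by
  obtain ⟨-, -, p, hp, hp'⟩ := h1
  obtain ⟨-, -, q, hq, hq'⟩ := h2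
  refine ⟨p, q, ?_, hp, hp', hq, hq'⟩
  rintro rfl
  apply hne
  funext i
  by_cases h : i = p
  · subst h; omega
  · rw [← hp' i h, hq' i h]

lemma cover_two_down {l κ b : Yl} (h1 : CoverY b l) (h2 : CoverY b κ) (hne : l ≠ κ) :
    ∃ p q, p ≠ q ∧ l p = b p + 1 ∧ (∀ i, i ≠ p → l i = b i) ∧
      κ q = b q + 1 ∧ (∀ i, i ≠ q → κ i = b i) := by
  obtain ⟨-, -, p, hp, hp'⟩ := h1
  obtain ⟨-, -, q, hq, hq'⟩ := h2
  refine ⟨p, q, ?_, hp, hp', hq, hq'⟩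
  rintro rfl
  apply hne
  funext i
  by_cases h : i = p
  · subst h; omega
  · rw [hp' i h, ← hq' i h]

lemma upper_unique {l κ a : Yl} (h1 : CoverY l a) (h2 : CoverY κ a) (hne : l ≠ κ) :
    a = fun i => max (l i) (κ i) := by
  obtain ⟨p, q, hpq, hp, hp', hq, hq'⟩ := cover_two_up h1 h2 hne
  funext i
  by_cases h : i = p
  · subst h
    have := hq' i (by omega)
    omega
  · by_cases h2 : i = q
    · subst h2
      have := hp' i h
      omega
    · have := hp' i h
      have := hq' i h2
      omega

lemma lower_unique {l κ b : Yl} (h1 : CoverY b l) (h2 : CoverY b κ) (hne : l ≠ κ) :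
    b = fun i => min (l i) (κ i) := by
  obtain ⟨p, q, hpq, hp, hp', hq, hq'⟩ := cover_two_down h1 h2 hne
  funext i
  by_cases h : i = p
  · subst h
    have := hq' i (by omega)
    omega
  · by_cases h2 : i = q
    · subst h2
      have := hp' i h
      omega
    · have := hp' i h
      have := hq' i h2
      omega

lemma common_lower_of_upper {l κ a : Yl} (h1 : CoverY l a) (h2 : CoverY κ a) (hne : l ≠ κ) :
    CoverY (fun i => min (l i) (κ i)) l := by
  have hl : IsPartition l := h1.1
  have hκ : IsPartition κ := h2.1
  have ha : IsPartition a := h1.2.1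
  obtain ⟨p, q, hpq, hp, hp', hq, hq'⟩ := cover_two_up h1 h2 hne
  rw [cover_down_iff hl]
  refine ⟨q, ?_, ?_⟩
  · -- Removable l q : l (q+1) < l q
    have hlq : l q = a q := (hp' q (by omega)).symm
    have haq : a q = κ q + 1 := hq
    by_cases hc : q + 1 = p
    · have hl1 : l (q+1) = a (q+1) - 1 := by rw [hc, hp]; omega
      have := ha.1 (show q ≤ q + 1 by omega)
      unfold Removable
      omega
    · have hl1 : l (q+1) = a (q+1) := (hp' (q+1) hc).symm
      have hκ1 : κ (q+1) = a (q+1) := by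
        rw [hq' (q+1) (by omega)]
      have := hκ.1 (show q ≤ q + 1 by omega)
      unfold Removable
      omega
  · funext i
    by_cases h : i = q
    · subst h
      have hlq : l i = a i := (hp' i (by omega)).symm
      simp [remB]
      omega
    · simp only [remB, if_neg h]
      by_cases h2 : i = p
      · subst h2
        have := hq' i (by omega)
        omega
      · have e1 := hp' i h2
        have e2 := hq' i h
        omega

lemma common_upper_of_lower {l κ b : Yl} (h1 : CoverY b l) (h2 : CoverY b κ) (hne : l ≠ κ) :
    CoverY l (fun i => max (l i) (κ i)) := by
  have hl : IsPartition l := h1.2.1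
  have hκ : IsPartition κ := h2.2.1
  obtain ⟨p, q, hpq, hp, hp', hq, hq'⟩ := cover_two_down h1 h2 hne
  rw [cover_up_iff hl]
  refine ⟨q, ?_, ?_⟩
  · -- Addable l q
    rintro d rfl
    have h3 : κ (d+1) ≤ κ d := hκ.1 (show d ≤ d + 1 by omega)
    have h4 : κ d = b d := hq' d (by omega)
    have h5 : l (d+1) = b (d+1) := hp' (d+1) (by omega)
    by_cases hc : d = p
    · subst hc
      omega
    · have := hp' d hc
      omega
  · funext i
    by_cases h : i = q
    · subst h
      have : l i = b i := hp' i (by omega)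
      simp [addB]
      omega
    · simp only [addB, if_neg h]
      by_cases h2 : i = p
      · subst h2
        have := hq' i (by omega)
        omega
      · have e1 := hp' i h2
        have e2 := hq' i h
        omega

open Classical in
lemma ncard_subsingleton_aux {S : Set Yl} {x : Yl} (h : S ⊆ {x}) :
    S.ncard = if S.Nonempty then 1 else 0 := by
  rcases Set.subset_singleton_iff_eq.1 h with rfl | rfl
  · simp
  · simp

open Classical in
/-- differential poset property (ii) -/
lemma common_card {l κ : Yl} (hne : l ≠ κ) :
    {a | CoverY l a ∧ CoverY κ a}.ncard = {b | CoverY b l ∧ CoverY b κ}.ncard := by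
  have hsub1 : {a | CoverY l a ∧ CoverY κ a} ⊆ {fun i => max (l i) (κ i)} := by
    rintro a ⟨h1, h2⟩
    exact upper_unique h1 h2 hne
  have hsub2 : {b | CoverY b l ∧ CoverY b κ} ⊆ {fun i => min (l i) (κ i)} := by
    rintro b ⟨h1, h2⟩
    exact lower_unique h1 h2 hne
  have hiff : {a | CoverY l a ∧ CoverY κ a}.Nonempty ↔ {b | CoverY b l ∧ CoverY b κ}.Nonempty := by
    constructor
    · rintro ⟨a, h1, h2⟩
      refine ⟨fun i => min (l i) (κ i), common_lower_of_upper h1 h2 hne, ?_⟩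
      have := common_lower_of_upper h2 h1 (Ne.symm hne)
      convert this using 2
      exact inf_comm _ _
    · rintro ⟨b, h1, h2⟩
      refine ⟨fun i => max (l i) (κ i), common_upper_of_lower h1 h2 hne, ?_⟩
      have := common_upper_of_lower h2 h1 (Ne.symm hne)
      convert this using 2
      exact sup_comm _ _
  rw [ncard_subsingleton_aux hsub1, ncard_subsingleton_aux hsub2, if_congr hiff rfl rfl]

end CommonCovers

section Chains

/-- chains with step relations `R i` -/
def Ch (R : ℕ → Yl → Yl → Prop) (m : ℕ) (lam : Yl) : Set (Fin (m+1) → Yl) :=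
  {T | T 0 = zf ∧ T (Fin.last m) = lam ∧ ∀ i : Fin m, R i.val (T i.castSucc) (T i.succ)}

def Rgood (R : ℕ → Yl → Yl → Prop) : Prop :=
  ∀ i a b, R i a b → ∀ c, Bdd c a → Bdd (c+1) b

lemma mem_Ch {R : ℕ → Yl → Yl → Prop} {m : ℕ} {lam : Yl} {T : Fin (m+1) → Yl} :
    T ∈ Ch R m lam ↔ T 0 = zf ∧ T (Fin.last m) = lam ∧
      ∀ i : ℕ, (h : i < m) → R i (T ⟨i, by omega⟩) (T ⟨i+1, by omega⟩) := by
  unfold Ch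
  simp only [Set.mem_setOf_eq]
  constructor
  · rintro ⟨h0, h1, h2⟩
    exact ⟨h0, h1, fun i h => h2 ⟨i, h⟩⟩
  · rintro ⟨h0, h1, h2⟩
    exact ⟨h0, h1, fun i => h2 i.val i.isLt⟩

lemma chain_bdd {R : ℕ → Yl → Yl → Prop} (hR : Rgood R) {m : ℕ} {lam : Yl}
    {T : Fin (m+1) → Yl} (hT : T ∈ Ch R m lam) :
    ∀ v : ℕ, (h : v < m + 1) → Bdd v (T ⟨v, h⟩) := by
  rw [mem_Ch] at hT
  intro v
  induction v with
  | zero =>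
    intro h
    have : (⟨0, h⟩ : Fin (m+1)) = 0 := rfl
    rw [this, hT.1]
    exact bdd_zf 0
  | succ v ih =>
    intro h
    exact hR v _ _ (hT.2.2 v (by omega)) v (ih (by omega))

lemma Ch_finite {R : ℕ → Yl → Yl → Prop} (hR : Rgood R) (m : ℕ) (lam : Yl) :
    (Ch R m lam).Finite := by
  apply Set.Finite.subset (Set.Finite.pi' (fun _ : Fin (m+1) => finite_Bdd m))
  intro T hT i
  have := chain_bdd hR hT i.val i.isLt
  have h2 : (⟨i.val, i.isLt⟩ : Fin (m+1)) = i := rfl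
  rw [h2] at this
  exact bdd_mono this (by omega)

lemma bdd_last {R : ℕ → Yl → Yl → Prop} (hR : Rgood R) {m : ℕ} {lam : Yl}
    (h : (Ch R m lam).Nonempty) : Bdd m lam := by
  obtain ⟨T, hT⟩ := h
  have := chain_bdd hR hT m (by omega)
  have h2 : (⟨m, by omega⟩ : Fin (m+1)) = Fin.last m := rfl
  rw [h2, (mem_Ch.1 hT).2.1] at this
  exact this

lemma ncard_eq_zero_of_not_bdd {R : ℕ → Yl → Yl → Prop} (hR : Rgood R) {m : ℕ} {lam : Yl}
    (h : ¬ Bdd m lam) : (Ch R m lam).ncard = 0 := by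
  rw [Set.ncard_eq_zero (Ch_finite hR m lam)]
  by_contra hne
  exact h (bdd_last hR (Set.nonempty_iff_ne_empty.2 hne))

open Classical in
/-- the key peel lemma -/
lemma peel {R : ℕ → Yl → Yl → Prop} (hR : Rgood R) (m : ℕ) (lam : Yl) :
    (Ch R (m+1) lam).ncard = ∑ μ ∈ bddF m, if R m μ lam then (Ch R m μ).ncard else 0 := by
  have hfin := Ch_finite hR (m+1) lam
  rw [Set.ncard_eq_toFinset_card _ hfin]
  have hmap : ∀ T ∈ hfin.toFinset, T (⟨m, by omega⟩ : Fin (m+2)) ∈ bddF m := by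
    intro T hT
    rw [Set.Finite.mem_toFinset] at hT
    exact mem_bddF.2 (chain_bdd hR hT m (by omega))
  rw [Finset.card_eq_sum_card_fiberwise hmap]
  apply Finset.sum_congr rfl
  intro μ hμ
  by_cases hRm : R m μ lam
  · rw [if_pos hRm, Set.ncard_eq_toFinset_card _ (Ch_finite hR m μ)]
    apply Finset.card_bij' (i := fun T _ => (fun j : Fin (m+1) => T j.castSucc))
      (j := fun T _ => (fun j : Fin (m+2) => if h : j.val < m+1 then T ⟨j.val, h⟩ else lam))
    · -- hi : truncation lands in Ch R m μ
      intro T hT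
      rw [Finset.mem_filter, Set.Finite.mem_toFinset, mem_Ch] at hT
      obtain ⟨⟨h0, h1, h2⟩, h3⟩ := hT
      rw [Set.Finite.mem_toFinset, mem_Ch]
      refine ⟨h0, ?_, ?_⟩
      · exact h3
      · intro i h
        exact h2 i (by omega)
    · -- hj : extension lands in the fiber
      intro T hT
      rw [Set.Finite.mem_toFinset, mem_Ch] at hT
      obtain ⟨h0, h1, h2⟩ := hT
      rw [Finset.mem_filter, Set.Finite.mem_toFinset, mem_Ch]
      refine ⟨⟨?_, ?_, ?_⟩, ?_⟩
      · show (if h : (0 : Fin (m+2)).val < m+1 then T ⟨(0 : Fin (m+2)).val, h⟩ else lam) = zf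
        rw [dif_pos (by simp)]
        exact h0
      · show (if h : (Fin.last (m+1)).val < m+1 then T ⟨(Fin.last (m+1)).val, h⟩ else lam) = lam
        rw [dif_neg (by simp)]
      · intro i h
        by_cases hi : i < m
        · have e1 : (if h : i < m+1 then T ⟨i, h⟩ else lam) = T ⟨i, by omega⟩ :=
            dif_pos (by omega)
          have e2 : (if h : i + 1 < m+1 then T ⟨i+1, h⟩ else lam) = T ⟨i+1, by omega⟩ :=
            dif_pos (by omega)
          show R i (if h : i < m+1 then T ⟨i, h⟩ else lam)
            (if h : i + 1 < m+1 then T ⟨i+1, h⟩ else lam)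
          rw [e1, e2]
          exact h2 i hi
        · have hi' : i = m := by omega
          have e1 : (if h : i < m+1 then T ⟨i, h⟩ else lam) = T ⟨i, by omega⟩ :=
            dif_pos (by omega)
          have e2 : (if h : i + 1 < m+1 then T ⟨i+1, h⟩ else lam) = lam :=
            dif_neg (by omega)
          show R i (if h : i < m+1 then T ⟨i, h⟩ else lam)
            (if h : i + 1 < m+1 then T ⟨i+1, h⟩ else lam)
          rw [e1, e2]
          have e3 : (⟨i, by omega⟩ : Fin (m+1)) = Fin.last m := by
            apply Fin.ext
            simp [hi']
          rw [e3, h1, hi']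
          exact hRm
      · show (if h : m < m+1 then T ⟨m, h⟩ else lam) = μ
        rw [dif_pos (by omega)]
        have : (⟨m, by omega⟩ : Fin (m+1)) = Fin.last m := rfl
        rw [this, h1]
    · -- left inverse
      intro T hT
      rw [Finset.mem_filter, Set.Finite.mem_toFinset, mem_Ch] at hT
      obtain ⟨⟨h0, h1, h2⟩, h3⟩ := hT
      funext j
      by_cases hj : j.val < m+1
      · show (if h : j.val < m+1 then T (Fin.castSucc ⟨j.val, h⟩) else lam) = T j
        rw [dif_pos hj]
        exact congrArg T (Fin.ext rfl)
      · have : j = Fin.last (m+1) := by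
          apply Fin.ext
          simp only [Fin.val_last]
          omega
        subst this
        show (if h : (Fin.last (m+1)).val < m+1 then T (Fin.castSucc ⟨(Fin.last (m+1)).val, h⟩) else lam) = T (Fin.last (m+1))
        rw [dif_neg (by simp), h1]
    · -- right inverse
      intro T hT
      funext j
      show (if h : (Fin.castSucc j).val < m+1 then T ⟨(Fin.castSucc j).val, h⟩ else lam) = T j
      rw [dif_pos (by exact j.isLt)]
      exact congrArg T (Fin.ext rfl)
  · rw [if_neg hRm]
    rw [Finset.card_eq_zero, Finset.filter_eq_empty_iff]
    intro T hT
    rw [Set.Finite.mem_toFinset, mem_Ch] at hT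
    intro hEq
    apply hRm
    have hstep := hT.2.2 m (by omega)
    have e1 : (⟨m + 1, by omega⟩ : Fin (m+2)) = Fin.last (m+1) := rfl
    rw [e1, hT.2.1] at hstep
    rwa [hEq] at hstep

end Chains

section SYTcount

lemma sum_ind' (P E : Finset Yl) (p : Yl → Prop) [DecidablePred p] (hE : ∀ x, x ∈ E ↔ p x)
    (hsub : ∀ x, p x → x ∈ P) (F : Yl → ℕ) :
    ∑ μ ∈ P, (if p μ then F μ else 0) = ∑ μ ∈ E, F μ := by
  rw [← Finset.sum_filter]
  apply Finset.sum_congr _ (fun _ _ => rfl)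
  ext x
  simp only [Finset.mem_filter, hE]
  exact ⟨fun h => h.2, fun h => ⟨hsub x h, h⟩⟩

lemma filter_card_eq (P : Finset Yl) (p : Yl → Prop) [DecidablePred p] (hfin : {x | p x}.Finite)
    (hsub : ∀ x, p x → x ∈ P) :
    (P.filter p).card = {x | p x}.ncard := by
  rw [Set.ncard_eq_toFinset_card _ hfin]
  congr 1
  ext x
  simp only [Finset.mem_filter, Set.Finite.mem_toFinset, Set.mem_setOf_eq]
  exact ⟨fun h => h.2, fun h => ⟨hsub x h, h⟩⟩

def CR : ℕ → Yl → Yl → Prop := fun _ => CoverY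

lemma Rgood_CR : Rgood CR := fun _ a b h c hc => cover_bdd h hc

/-- number of SYT of shape l -/
def fY (l : Yl) : ℕ := (Ch CR (sz l) l).ncard

lemma Ch_zero_self (R : ℕ → Yl → Yl → Prop) : Ch R 0 zf = {fun _ => zf} := by
  ext T
  rw [mem_Ch]
  simp only [Set.mem_singleton_iff]
  constructor
  · rintro ⟨h0, -, -⟩
    funext j
    have hj : j = 0 := Fin.fin_one_eq_zero j
    rw [hj]
    exact h0
  · rintro rfl
    exact ⟨rfl, rfl, fun i h => absurd h (by omega)⟩

lemma Ch_zero_ne (R : ℕ → Yl → Yl → Prop) {lam : Yl} (h : lam ≠ zf) : Ch R 0 lam = ∅ := by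
  ext T
  rw [mem_Ch]
  simp only [Set.mem_empty_iff_false, iff_false]
  rintro ⟨h0, h1, -⟩
  apply h
  rw [← h1]
  exact h0

lemma fY_zf : fY zf = 1 := by
  rw [fY, sz_zf, Ch_zero_self, Set.ncard_singleton]

lemma cover_target_ne_zf {l μ : Yl} (h : CoverY l μ) : μ ≠ zf := by
  obtain ⟨-, -, j, hj, -⟩ := h
  intro he
  rw [he] at hj
  exact absurd hj (by simp [zf])

open Classical in
/-- the recurrence for counting SYT -/
lemma frec {l : Yl} (hl : IsPartition l) (hne : l ≠ zf) :
    ∑ μ ∈ downF l, fY μ = fY l := by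
  obtain ⟨s, hs⟩ : ∃ s, sz l = s + 1 := ⟨sz l - 1, by have := sz_pos hl hne; omega⟩
  rw [fY, hs, peel Rgood_CR s l]
  have e1 : ∀ μ ∈ bddF s, (if CR s μ l then (Ch CR s μ).ncard else 0)
      = (if CoverY μ l then fY μ else 0) := by
    intro μ _
    by_cases h : CoverY μ l
    · rw [if_pos (show CR s μ l from h), if_pos h]
      have hsz : sz μ = s := by
        have := cover_sz h
        omega
      rw [fY, hsz]
    · rw [if_neg (show ¬ CR s μ l from h), if_neg h]
  rw [Finset.sum_congr rfl e1]
  rw [sum_ind' (bddF s) (downF l) (fun μ => CoverY μ l) (fun x => mem_downF)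
    (fun x hx => mem_bddF.2 (bdd_of_sz hx.1 (by have := cover_sz hx; omega)))]

open Classical in
lemma I2_step {l : Yl} (hl : IsPartition l)
    (hIH : ∀ β, CoverY β l → ∑ μ ∈ upF β, fY μ = (sz β + 1) * fY β) :
    ∑ μ ∈ upF l, fY μ = (sz l + 1) * fY l := by
  set Q := bddF (sz l + 2) with hQdef
  have hQu : ∀ v, CoverY l v → v ∈ Q := by
    intro v hv
    rw [hQdef, mem_bddF]
    exact bdd_of_sz hv.2.1 (by rw [cover_sz hv]; omega)
  have hQd : ∀ v, CoverY v l → v ∈ Q := by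
    intro v hv
    rw [hQdef, mem_bddF]
    refine bdd_of_sz hv.1 ?_
    have := cover_sz hv
    omega
  have hQdm : ∀ μ, CoverY l μ → ∀ κ, CoverY κ μ → κ ∈ Q := by
    intro μ hμ κ hκ
    rw [hQdef, mem_bddF]
    apply bdd_of_sz hκ.1
    have h1 := cover_sz hμ
    have h2 := cover_sz hκ
    omega
  have hQub : ∀ β, CoverY β l → ∀ κ, CoverY β κ → κ ∈ Q := by
    intro β hβ κ hκ
    rw [hQdef, mem_bddF]
    apply bdd_of_sz hκ.2.1
    have h1 := cover_sz hβ
    have h2 := cover_sz hκ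
    omega
  have hup : ∀ μ, CoverY l μ → fY μ = fY l + ∑ κ ∈ (downF μ).erase l, fY κ := by
    intro μ hμ
    rw [← frec hμ.2.1 (cover_target_ne_zf hμ),
      ← Finset.add_sum_erase _ fY (mem_downF.2 hμ)]
  have key : ∑ μ ∈ upF l, fY μ
      = (upF l).card * fY l + ∑ μ ∈ upF l, ∑ κ ∈ (downF μ).erase l, fY κ := by
    calc ∑ μ ∈ upF l, fY μ
        = ∑ μ ∈ upF l, (fY l + ∑ κ ∈ (downF μ).erase l, fY κ) :=
          Finset.sum_congr rfl (fun μ hμ => hup μ (mem_upF.1 hμ))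
      _ = (∑ _μ ∈ upF l, fY l) + ∑ μ ∈ upF l, ∑ κ ∈ (downF μ).erase l, fY κ :=
          Finset.sum_add_distrib
      _ = _ := by rw [Finset.sum_const, smul_eq_mul]
  have swap : ∑ μ ∈ upF l, ∑ κ ∈ (downF μ).erase l, fY κ
      = ∑ β ∈ downF l, ∑ κ ∈ (upF β).erase l, fY κ := by
    have e1 : ∀ μ ∈ upF l, ∑ κ ∈ (downF μ).erase l, fY κ
        = ∑ κ ∈ Q, (if CoverY κ μ ∧ κ ≠ l then fY κ else 0) := by
      intro μ hμ
      exact (sum_ind' Q ((downF μ).erase l) (fun κ => CoverY κ μ ∧ κ ≠ l)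
        (fun x => by rw [Finset.mem_erase, mem_downF]; tauto)
        (fun x hx => hQdm μ (mem_upF.1 hμ) x hx.1) fY).symm
    have e2 : ∀ β ∈ downF l, ∑ κ ∈ (upF β).erase l, fY κ
        = ∑ κ ∈ Q, (if CoverY β κ ∧ κ ≠ l then fY κ else 0) := by
      intro β hβ
      exact (sum_ind' Q ((upF β).erase l) (fun κ => CoverY β κ ∧ κ ≠ l)
        (fun x => by rw [Finset.mem_erase, mem_upF]; tauto)
        (fun x hx => hQub β (mem_downF.1 hβ) x hx.1) fY).symm
    have cardswap : ∀ κ, κ ≠ l →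
        (Q.filter (fun μ => CoverY l μ ∧ CoverY κ μ)).card
          = (Q.filter (fun β => CoverY β l ∧ CoverY β κ)).card := by
      intro κ hκ
      have hf1 : {a : Yl | CoverY l a ∧ CoverY κ a}.Finite :=
        (finite_UpS l).subset (fun a ha => ha.1)
      have hs1 : ∀ a : Yl, CoverY l a ∧ CoverY κ a → a ∈ Q := fun a ha => hQu a ha.1
      have hf2 : {b : Yl | CoverY b l ∧ CoverY b κ}.Finite :=
        (finite_DownS l).subset (fun b hb => hb.1)
      have hs2 : ∀ b : Yl, CoverY b l ∧ CoverY b κ → b ∈ Q := fun b hb => hQd b hb.1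
      rw [filter_card_eq Q (fun μ => CoverY l μ ∧ CoverY κ μ) hf1 hs1,
        filter_card_eq Q (fun β => CoverY β l ∧ CoverY β κ) hf2 hs2]
      exact common_card (Ne.symm hκ)
    calc ∑ μ ∈ upF l, ∑ κ ∈ (downF μ).erase l, fY κ
        = ∑ μ ∈ upF l, ∑ κ ∈ Q, (if CoverY κ μ ∧ κ ≠ l then fY κ else 0) :=
          Finset.sum_congr rfl e1
      _ = ∑ μ ∈ Q, (if CoverY l μ then
            ∑ κ ∈ Q, (if CoverY κ μ ∧ κ ≠ l then fY κ else 0) else 0) :=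
          (sum_ind' Q (upF l) (fun v => CoverY l v) (fun x => mem_upF) hQu _).symm
      _ = ∑ μ ∈ Q, ∑ κ ∈ Q, (if CoverY l μ ∧ CoverY κ μ ∧ κ ≠ l then fY κ else 0) := by
          apply Finset.sum_congr rfl
          intro μ _
          by_cases h : CoverY l μ <;> simp [h]
      _ = ∑ κ ∈ Q, ∑ μ ∈ Q, (if CoverY l μ ∧ CoverY κ μ ∧ κ ≠ l then fY κ else 0) :=
          Finset.sum_comm
      _ = ∑ κ ∈ Q, ∑ β ∈ Q, (if CoverY β l ∧ CoverY β κ ∧ κ ≠ l then fY κ else 0) := by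
          apply Finset.sum_congr rfl
          intro κ _
          by_cases hκ : κ = l
          · subst hκ
            simp
          · have h1 : ∑ μ ∈ Q, (if CoverY l μ ∧ CoverY κ μ ∧ κ ≠ l then fY κ else 0)
                = ∑ μ ∈ Q, (if CoverY l μ ∧ CoverY κ μ then fY κ else 0) := by
              apply Finset.sum_congr rfl
              intro μ _
              by_cases h : CoverY l μ ∧ CoverY κ μ <;> simp [h, hκ] <;> tauto
            have h2 : ∑ β ∈ Q, (if CoverY β l ∧ CoverY β κ ∧ κ ≠ l then fY κ else 0)
                = ∑ β ∈ Q, (if CoverY β l ∧ CoverY β κ then fY κ else 0) := by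
              apply Finset.sum_congr rfl
              intro β _
              by_cases h : CoverY β l ∧ CoverY β κ <;> simp [h, hκ] <;> tauto
            rw [h1, h2, ← Finset.sum_filter, ← Finset.sum_filter,
              Finset.sum_const, Finset.sum_const, smul_eq_mul, smul_eq_mul,
              cardswap κ hκ]
      _ = ∑ β ∈ Q, ∑ κ ∈ Q, (if CoverY β l ∧ CoverY β κ ∧ κ ≠ l then fY κ else 0) :=
          Finset.sum_comm
      _ = ∑ β ∈ Q, (if CoverY β l then
            ∑ κ ∈ Q, (if CoverY β κ ∧ κ ≠ l then fY κ else 0) else 0) := by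
          apply Finset.sum_congr rfl
          intro β _
          by_cases h : CoverY β l <;> simp [h]
      _ = ∑ β ∈ downF l, ∑ κ ∈ Q, (if CoverY β κ ∧ κ ≠ l then fY κ else 0) :=
          sum_ind' Q (downF l) (fun v => CoverY v l) (fun x => mem_downF) hQd _
      _ = ∑ β ∈ downF l, ∑ κ ∈ (upF β).erase l, fY κ :=
          (Finset.sum_congr rfl e2).symm
  have sumdown : ∑ β ∈ downF l, ∑ κ ∈ (upF β).erase l, fY κ + (downF l).card * fY l
      = sz l * fY l := by
    have hdown : ∀ β ∈ downF l, (∑ κ ∈ (upF β).erase l, fY κ) + fY l = sz l * fY β := by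
      intro β hβ
      have hβc := mem_downF.1 hβ
      have h1 : fY l + ∑ κ ∈ (upF β).erase l, fY κ = ∑ κ ∈ upF β, fY κ :=
        Finset.add_sum_erase _ fY (mem_upF.2 hβc)
      have h2 := hIH β hβc
      have h3 := cover_sz hβc
      rw [add_comm, h1, h2, ← h3]
    have hsum : ∑ β ∈ downF l, ((∑ κ ∈ (upF β).erase l, fY κ) + fY l)
        = ∑ β ∈ downF l, sz l * fY β := Finset.sum_congr rfl hdown
    rw [Finset.sum_add_distrib, Finset.sum_const, smul_eq_mul] at hsum
    rw [hsum, ← Finset.mul_sum]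
    by_cases hz : l = zf
    · subst hz
      rw [sz_zf]
      simp
    · rw [frec hl hz]
  have hfinal : (∑ μ ∈ upF l, fY μ) + (downF l).card * fY l
      = (sz l + 1) * fY l + (downF l).card * fY l := by
    rw [key, swap, card_up_eq_card_down_add_one hl, add_assoc, sumdown]
    ring
  exact Nat.add_right_cancel hfinal

lemma I2 {l : Yl} (hl : IsPartition l) :
    ∑ μ ∈ upF l, fY μ = (sz l + 1) * fY l := by
  suffices h : ∀ N l', IsPartition l' → sz l' ≤ N →
      ∑ μ ∈ upF l', fY μ = (sz l' + 1) * fY l' from h (sz l) l hl le_rfl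
  intro N
  induction N with
  | zero =>
    intro l' hl' hsz
    apply I2_step hl'
    intro β hβ
    exact absurd (cover_sz hβ) (by omega)
  | succ N ih =>
    intro l' hl' hsz
    apply I2_step hl'
    intro β hβ
    exact ih β hβ.1 (by have := cover_sz hβ; omega)

end SYTcount

section MainInduction

def Rst : ℕ → Yl → Yl → Prop :=
  fun i a b => if i % 3 = 2 then CoverY b a else (CoverY a b ∨ a = b)

lemma Rgood_Rst : Rgood Rst := by
  intro i a b h c hc
  unfold Rst at h
  by_cases hi : i % 3 = 2
  · rw [if_pos hi] at h
    exact cover_bdd_rev h hc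
  · rw [if_neg hi] at h
    rcases h with h | rfl
    · exact cover_bdd h hc
    · exact bdd_mono hc (by omega)

lemma Rst_sz {i : ℕ} {a b : Yl} (h : Rst i a b) : sz b ≤ sz a + 1 := by
  unfold Rst at h
  by_cases hi : i % 3 = 2
  · rw [if_pos hi] at h
    have := cover_sz h
    omega
  · rw [if_neg hi] at h
    rcases h with h | rfl
    · have := cover_sz h
      omega
    · omega

lemma chain_sz {m : ℕ} {lam : Yl} {T : Fin (m+1) → Yl} (hT : T ∈ Ch Rst m lam) :
    ∀ v : ℕ, (h : v < m + 1) → sz (T ⟨v, h⟩) ≤ v := by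
  rw [mem_Ch] at hT
  intro v
  induction v with
  | zero =>
    intro h
    have e : (⟨0, h⟩ : Fin (m+1)) = 0 := rfl
    rw [e, hT.1, sz_zf]
  | succ v ih =>
    intro h
    have := Rst_sz (hT.2.2 v (by omega))
    have := ih (by omega)
    omega

lemma G_sz_le {m : ℕ} {lam : Yl} (h : (Ch Rst m lam).Nonempty) : sz lam ≤ m := by
  obtain ⟨T, hT⟩ := h
  have := chain_sz hT m (by omega)
  rw [show (⟨m, by omega⟩ : Fin (m+1)) = Fin.last m from rfl, (mem_Ch.1 hT).2.1] at this
  exact this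

lemma G_sz_down {m : ℕ} {lam : Yl} (hm : m % 3 = 2)
    (h : (Ch Rst (m+1) lam).Nonempty) : sz lam + 1 ≤ m := by
  obtain ⟨T, hT⟩ := h
  have hstep := (mem_Ch.1 hT).2.2 m (by omega)
  unfold Rst at hstep
  rw [if_pos hm] at hstep
  rw [show (⟨m + 1, by omega⟩ : Fin (m+2)) = Fin.last (m+1) from rfl,
    (mem_Ch.1 hT).2.1] at hstep
  have h1 := cover_sz hstep
  have h2 := chain_sz hT m (by omega)
  omega

lemma Ch_partition {m : ℕ} {lam : Yl} {L : Fin (m+1) → Yl} (hL : L ∈ Ch Rst m lam) :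
    ∀ i : Fin (m+1), IsPartition (L i) := by
  suffices h : ∀ v : ℕ, (hv : v < m+1) → IsPartition (L ⟨v, hv⟩) by
    intro i
    have := h i.val i.isLt
    rwa [show (⟨i.val, i.isLt⟩ : Fin (m+1)) = i from rfl] at this
  intro v
  induction v with
  | zero =>
    intro hv
    rw [show (⟨0, hv⟩ : Fin (m+1)) = 0 from rfl, (mem_Ch.1 hL).1]
    exact isPartition_zf
  | succ v ih =>
    intro hv
    have hstep := (mem_Ch.1 hL).2.2 v (by omega)
    unfold Rst at hstep
    by_cases hm : v % 3 = 2
    · rw [if_pos hm] at hstep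
      exact hstep.1
    · rw [if_neg hm] at hstep
      rcases hstep with hc | he
      · exact hc.2.1
      · rw [← he]
        exact ih (by omega)

def hfun : ℕ → ℕ → ℕ
  | 0, 0 => 1
  | 0, _+1 => 0
  | (m+1), k =>
    if m % 3 = 2 then (k+1) * hfun m (k+1)
    else hfun m k + (if k = 0 then 0 else hfun m (k-1))

lemma hfun_succ_eq2 {m : ℕ} (h : m % 3 = 2) (k : ℕ) :
    hfun (m+1) k = (k+1) * hfun m (k+1) := by
  rw [hfun, if_pos h]

lemma hfun_succ_ne2' {m : ℕ} (h : m % 3 ≠ 2) (k : ℕ) :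
    hfun (m+1) k = hfun m k + (if k = 0 then 0 else hfun m (k-1)) := by
  rw [hfun, if_neg h]

lemma hfun_zero_of_lt : ∀ m k, m < k → hfun m k = 0 := by
  intro m
  induction m with
  | zero =>
    intro k hk
    match k, hk with
    | k+1, _ => rfl
  | succ m ih =>
    intro k hk
    by_cases h : m % 3 = 2
    · rw [hfun_succ_eq2 h, ih (k+1) (by omega), mul_zero]
    · rw [hfun_succ_ne2' h, ih k (by omega), if_neg (by omega : ¬ k = 0),
        ih (k-1) (by omega)]

lemma hfun_pascal {M : ℕ} (h : M % 3 ≠ 2) (c N : ℕ)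
    (hM : ∀ k, hfun M k = c * N.choose k) :
    ∀ k, hfun (M+1) k = c * (N+1).choose k := by
  intro k
  rw [hfun_succ_ne2' h]
  cases k with
  | zero => simp [hM 0]
  | succ k =>
    rw [if_neg (by omega : ¬ k + 1 = 0), hM (k+1), hM, Nat.succ_sub_one,
      Nat.choose_succ_succ (N) k, Nat.mul_add]
    ring

lemma hfun_absorb {M : ℕ} (h : M % 3 = 2) (c N : ℕ)
    (hM : ∀ k, hfun M k = c * (N+1).choose k) :
    ∀ k, hfun (M+1) k = (c * (N+1)) * N.choose k := by
  intro k
  rw [hfun_succ_eq2 h, hM (k+1)]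
  have key : (N+1) * N.choose k = (N+1).choose (k+1) * (k+1) := Nat.add_one_mul_choose_eq N k
  calc (k+1) * (c * (N+1).choose (k+1)) = c * ((N+1).choose (k+1) * (k+1)) := by ring
    _ = c * ((N+1) * N.choose k) := by rw [← key]
    _ = (c * (N+1)) * N.choose k := by ring

lemma hfun_closed (n : ℕ) : ∀ k, hfun (3*n) k = (n+1).factorial * n.choose k := by
  induction n with
  | zero =>
    intro k
    cases k with
    | zero => rfl
    | succ k =>
      rw [show (3*0) = 0 by ring, show hfun 0 (k+1) = 0 from rfl]
      simp
  | succ n ih =>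
    have h1 := hfun_pascal (M := 3*n) (by omega) _ _ ih
    have h2 := hfun_pascal (M := 3*n+1) (by omega) _ _ h1
    have h3 := hfun_absorb (M := 3*n+1+1) (by omega) ((n+1).factorial) (n+1) h2
    intro k
    have e : 3 * (n+1) = (3*n+1+1)+1 := by ring
    rw [e, h3 k]
    congr 1
    rw [Nat.factorial_succ (n+1)]
    ring

open Classical in
lemma Gmain : ∀ m l, IsPartition l → (Ch Rst m l).ncard = hfun m (sz l) * fY l := by
  intro m
  induction m with
  | zero =>
    intro l hl
    by_cases h : l = zf
    · subst h
      rw [Ch_zero_self, Set.ncard_singleton, sz_zf, fY_zf]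
      rfl
    · rw [Ch_zero_ne _ h, Set.ncard_empty]
      obtain ⟨s, hs⟩ : ∃ s, sz l = s + 1 := ⟨sz l - 1, by have := sz_pos hl h; omega⟩
      rw [hs, show hfun 0 (s+1) = 0 from rfl, zero_mul]
  | succ m ih =>
    intro l hl
    by_cases hm : m % 3 = 2
    · -- down step
      by_cases hok : sz l + 1 ≤ m
      · rw [peel Rgood_Rst m l]
        have estep : ∀ μ ∈ bddF m, (if Rst m μ l then (Ch Rst m μ).ncard else 0)
            = (if CoverY l μ then hfun m (sz l + 1) * fY μ else 0) := by
          intro μ _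
          by_cases hc : CoverY l μ
          · rw [if_pos (show Rst m μ l from by unfold Rst; rw [if_pos hm]; exact hc),
              if_pos hc, ih μ hc.2.1, cover_sz hc]
          · rw [if_neg (show ¬ Rst m μ l from by unfold Rst; rw [if_pos hm]; exact hc),
              if_neg hc]
        rw [Finset.sum_congr rfl estep]
        rw [sum_ind' (bddF m) (upF l) (fun v => CoverY l v) (fun x => mem_upF)
          (fun x hx => mem_bddF.2 (bdd_of_sz hx.2.1 (by rw [cover_sz hx]; omega)))
          (fun μ => hfun m (sz l + 1) * fY μ)]
        rw [← Finset.mul_sum, I2 hl, hfun_succ_eq2 hm]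
        ring
      · have h0 : (Ch Rst (m+1) l).ncard = 0 := by
          rw [Set.ncard_eq_zero (Ch_finite Rgood_Rst _ _)]
          by_contra hne
          have := G_sz_down hm (Set.nonempty_iff_ne_empty.2 hne)
          omega
        rw [h0, hfun_succ_eq2 hm, hfun_zero_of_lt m (sz l + 1) (by omega)]
        ring
    · -- up step
      by_cases hok : sz l ≤ m + 1
      · rw [peel Rgood_Rst m l]
        have estep : ∀ μ ∈ bddF m, (if Rst m μ l then (Ch Rst m μ).ncard else 0)
            = (if CoverY μ l then hfun m (sz l - 1) * fY μ else 0)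
              + (if μ = l then (Ch Rst m l).ncard else 0) := by
          intro μ _
          by_cases hc : CoverY μ l
          · have hne : μ ≠ l := cover_ne hc
            have hsz : sz μ = sz l - 1 := by
              have := cover_sz hc
              omega
            rw [if_pos (show Rst m μ l from by unfold Rst; rw [if_neg hm]; exact Or.inl hc),
              if_pos hc, if_neg hne, ih μ hc.1, hsz, add_zero]
          · by_cases he : μ = l
            · subst he
              rw [if_pos (show Rst m μ μ from by unfold Rst; rw [if_neg hm]; exact Or.inr rfl),
                if_neg hc, if_pos rfl, zero_add]
            · rw [if_neg (show ¬ Rst m μ l from by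
                  unfold Rst; rw [if_neg hm]; rintro (h | h); exact hc h; exact he h),
                if_neg hc, if_neg he, add_zero]
        rw [Finset.sum_congr rfl estep, Finset.sum_add_distrib]
        have hsecond : ∑ μ ∈ bddF m, (if μ = l then (Ch Rst m l).ncard else 0)
            = (Ch Rst m l).ncard := by
          rw [Finset.sum_ite_eq' (bddF m) l (fun _ => (Ch Rst m l).ncard)]
          by_cases hin : l ∈ bddF m
          · rw [if_pos hin]
          · rw [if_neg hin]
            exact (ncard_eq_zero_of_not_bdd Rgood_Rst (fun hb => hin (mem_bddF.2 hb))).symm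
        rw [hsecond, ih l hl]
        by_cases hz : l = zf
        · subst hz
          have hzero : ∀ μ ∈ bddF m, (if CoverY μ zf then hfun m (sz zf - 1) * fY μ else 0) = 0 := by
            intro μ _
            rw [if_neg]
            rintro ⟨-, -, j, hj, -⟩
            have : zf j = 0 := rfl
            omega
          rw [Finset.sum_congr rfl hzero, Finset.sum_const, smul_eq_mul, mul_zero, zero_add,
            sz_zf, hfun_succ_ne2' hm, if_pos rfl, add_zero]
        · obtain ⟨s, hs⟩ : ∃ s, sz l = s + 1 := ⟨sz l - 1, by have := sz_pos hl hz; omega⟩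
          have hs' : sz l - 1 = s := by omega
          rw [hs', hs]
          rw [sum_ind' (bddF m) (downF l) (fun v => CoverY v l) (fun x => mem_downF)
            (fun x hx => mem_bddF.2 (bdd_of_sz hx.1 (by have := cover_sz hx; omega)))
            (fun μ => hfun m s * fY μ)]
          rw [← Finset.mul_sum, frec hl hz, hfun_succ_ne2' hm, if_neg (by omega : ¬ s + 1 = 0),
            Nat.succ_sub_one]
          ring
      · have h0 : (Ch Rst (m+1) l).ncard = 0 := by
          rw [Set.ncard_eq_zero (Ch_finite Rgood_Rst _ _)]
          by_contra hne
          have := G_sz_le (Set.nonempty_iff_ne_empty.2 hne)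
          omega
        rw [h0, hfun_succ_ne2' hm, hfun_zero_of_lt m (sz l) (by omega),
          if_neg (by omega : ¬ sz l = 0), hfun_zero_of_lt m (sz l - 1) (by omega)]
        ring

end MainInduction

end StammAux

lemma numSYT_eq_Ch (k : ℕ) (lam : ℕ → ℕ) : numSYT k lam = (Ch CR k lam).ncard := rfl

/-- The number of generalized stammering tableaux of size `n` from `∅` to a
partition `lam` with `|lam| = k`: sequences `(λ⁽⁰⁾, …, λ⁽³ⁿ⁾)` of partitions
with `λ⁽⁰⁾ = ∅`, `λ⁽³ⁿ⁾ = lam`, where for `i ≡ 0, 1 (mod 3)` either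
`λ⁽ⁱ⁾ ⋖ λ⁽ⁱ⁺¹⁾` or `λ⁽ⁱ⁾ = λ⁽ⁱ⁺¹⁾`, and for `i ≡ 2 (mod 3)` one has
`λ⁽ⁱ⁾ ⋗ λ⁽ⁱ⁺¹⁾`, equals `(n+1)! · C(n,k) · f_lam`. -/
theorem card_generalized_stammering_tableaux (n k : ℕ) (lam : ℕ → ℕ)
    (hlam : IsPartition lam) (hsize : ∑ᶠ i, lam i = k) :
    {L : Fin (3 * n + 1) → (ℕ → ℕ) |
      (∀ i, IsPartition (L i)) ∧
      L 0 = (fun _ => 0) ∧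
      L (Fin.last (3 * n)) = lam ∧
      ∀ i : ℕ, (h : i < 3 * n) →
        (if i % 3 = 2 then
          CoverY (L ⟨i + 1, by omega⟩) (L ⟨i, by omega⟩)
        else
          CoverY (L ⟨i, by omega⟩) (L ⟨i + 1, by omega⟩) ∨
            L ⟨i, by omega⟩ = L ⟨i + 1, by omega⟩)}.ncard
      = Nat.factorial (n + 1) * n.choose k * numSYT k lam := by
  have hsz : sz lam = k := hsize
  have hset : {L : Fin (3 * n + 1) → (ℕ → ℕ) |
      (∀ i, IsPartition (L i)) ∧
      L 0 = (fun _ => 0) ∧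
      L (Fin.last (3 * n)) = lam ∧
      ∀ i : ℕ, (h : i < 3 * n) →
        (if i % 3 = 2 then
          CoverY (L ⟨i + 1, by omega⟩) (L ⟨i, by omega⟩)
        else
          CoverY (L ⟨i, by omega⟩) (L ⟨i + 1, by omega⟩) ∨
            L ⟨i, by omega⟩ = L ⟨i + 1, by omega⟩)} = Ch Rst (3 * n) lam := by
    ext L
    simp only [Set.mem_setOf_eq]
    rw [mem_Ch]
    constructor
    · rintro ⟨hpart, h0, h1, h2⟩
      exact ⟨h0, h1, fun i h => h2 i h⟩
    · rintro ⟨h0, h1, h2⟩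
      exact ⟨Ch_partition (mem_Ch.2 ⟨h0, h1, h2⟩), h0, h1, fun i h => h2 i h⟩
  rw [hset, Gmain (3 * n) lam hlam, hsz, hfun_closed n k, numSYT_eq_Ch, ← hsz]
  rfl
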